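/- BV-convergence theorem for the Kurzweil–Stieltjes integral: let g : [a,b] → ℝ be bounded, and let f_n : [a,b] → ℝ be such that (K)∫_a^b f_n dg exists for every n and ‖f_n − f‖_BV := |f_n(a) − f(a)| + var_a^b(f_n − f) → 0. Then (K)∫_a^b f dg exists and lim_{n→∞} (K)∫_a^b f_n dg = (K)∫_a^b f dg. -/

import Mathlib

open Set Filter

/-- A tagged partition of `[a,b]`: points `a = pts 0 < pts 1 < … < pts n = b`
with tags `tag j ∈ [pts j, pts (j+1)]`. -/
structure TaggedPartition (a b : ℝ) where
  n : ℕ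
  pts : ℕ → ℝ
  tag : ℕ → ℝ
  n_pos : 0 < n
  pts_zero : pts 0 = a
  pts_last : pts n = b
  pts_mono : ∀ j < n, pts j < pts (j + 1)
  tag_mem : ∀ j < n, tag j ∈ Set.Icc (pts j) (pts (j + 1))

/-- Riemann–Stieltjes sum `S(f, dg, P)`. -/
def RS (f g : ℝ → ℝ) {a b : ℝ} (P : TaggedPartition a b) : ℝ :=
  ∑ j ∈ Finset.range P.n, f (P.tag j) * (g (P.pts (j + 1)) - g (P.pts j))

/-- `P` is `δ`-fine. -/
def IsFine (δ : ℝ → ℝ) {a b : ℝ} (P : TaggedPartition a b) : Prop :=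
  ∀ j < P.n, Set.Icc (P.pts j) (P.pts (j + 1)) ⊆
    Set.Icc (P.tag j - δ (P.tag j)) (P.tag j + δ (P.tag j))

/-- The Kurzweil–Stieltjes integral `(K)∫_a^b f dg` exists and equals `I`. -/
def HasKS (f g : ℝ → ℝ) (a b I : ℝ) : Prop :=
  ∀ ε > 0, ∃ δ : ℝ → ℝ, (∀ t ∈ Set.Icc a b, 0 < δ t ∧ δ t < 1) ∧
    ∀ P : TaggedPartition a b, IsFine δ P → |RS f g P - I| < ε

/-- The division of `P` contains all points of the finite set `D`. -/
def Refines {a b : ℝ} (P : TaggedPartition a b) (D : Finset ℝ) : Prop :=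
  ∀ x ∈ D, ∃ j ≤ P.n, P.pts j = x

/-- All tags of `P` lie strictly inside the corresponding subintervals. -/
def InteriorTags {a b : ℝ} (P : TaggedPartition a b) : Prop :=
  ∀ j < P.n, P.pts j < P.tag j ∧ P.tag j < P.pts (j + 1)

/-- The Dushnik integral `(D)∫_a^b f dg` exists and equals `I`. -/
def HasDushnik (f g : ℝ → ℝ) (a b I : ℝ) : Prop :=
  ∀ ε > 0, ∃ D : Finset ℝ, ↑D ⊆ Set.Icc a b ∧
    ∀ P : TaggedPartition a b, Refines P D → InteriorTags P → |RS f g P - I| < ε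

/-- `f` is regulated on `[a,b]`: it has finite one-sided limits (within `[a,b]`)
at every point where they make sense. -/
def Regulated (f : ℝ → ℝ) (a b : ℝ) : Prop :=
  (∀ t ∈ Set.Ioc a b, ∃ L : ℝ, Filter.Tendsto f (nhdsWithin t (Set.Ico a t)) (nhds L)) ∧
  (∀ t ∈ Set.Ico a b, ∃ L : ℝ, Filter.Tendsto f (nhdsWithin t (Set.Ioc t b)) (nhds L))

/-- The Young sum `S_Y(f, dg, P)`, where `gl t = g(t-)` and `gr t = g(t+)`
are the one-sided limit functions of `g`. -/
def YS (f gl gr g : ℝ → ℝ) {a b : ℝ} (P : TaggedPartition a b) : ℝ :=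
  ∑ j ∈ Finset.range P.n,
    (f (P.pts j) * (gr (P.pts j) - g (P.pts j))
      + f (P.tag j) * (gl (P.pts (j + 1)) - gr (P.pts j))
      + f (P.pts (j + 1)) * (g (P.pts (j + 1)) - gl (P.pts (j + 1))))

/-- The Young integral `(Y)∫_a^b f dg` exists and equals `I` (here `gl`, `gr`
are the one-sided limit functions of `g`). -/
def HasYoung (f gl gr g : ℝ → ℝ) (a b I : ℝ) : Prop :=
  ∀ ε > 0, ∃ D : Finset ℝ, ↑D ⊆ Set.Icc a b ∧
    ∀ P : TaggedPartition a b, Refines P D → InteriorTags P → |YS f gl gr g P - I| < ε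

/-- `f` is a finite step function on `[a,b]`: constant on the open subintervals
of some division `a = σ 0 < … < σ m = b`. -/
def IsStepFunction (f : ℝ → ℝ) (a b : ℝ) : Prop :=
  ∃ (m : ℕ) (σ : ℕ → ℝ), 0 < m ∧ σ 0 = a ∧ σ m = b ∧ (∀ k < m, σ k < σ (k + 1)) ∧
    ∀ k < m, ∀ x ∈ Set.Ioo (σ k) (σ (k + 1)), ∀ y ∈ Set.Ioo (σ k) (σ (k + 1)), f x = f y

/-- The (real-valued) total variation of `g` on `[a,b]`. -/
noncomputable def var (g : ℝ → ℝ) (a b : ℝ) : ℝ :=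
  (eVariationOn g (Set.Icc a b)).toReal

/-! ### Auxiliary lemmas -/

namespace TaggedPartition

variable {a b : ℝ}

lemma pts_mono_le (P : TaggedPartition a b) : ∀ {j : ℕ}, j ≤ P.n → ∀ {i : ℕ}, i ≤ j →
    P.pts i ≤ P.pts j := by
  intro j
  induction j with
  | zero => intro _ i hi; obtain rfl : i = 0 := Nat.le_zero.mp hi; exact le_rfl
  | succ k ih =>
    intro hj i hi
    rcases Nat.lt_succ_iff_lt_or_eq.mp (Nat.lt_succ_of_le hi) with h | rfl
    · exact le_trans (ih (le_trans (Nat.le_succ k) hj) (Nat.lt_succ_iff.mp h))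
        (P.pts_mono k hj).le
    · exact le_rfl

lemma pts_mem_Icc (P : TaggedPartition a b) {j : ℕ} (hj : j ≤ P.n) :
    P.pts j ∈ Set.Icc a b := by
  constructor
  · have := P.pts_mono_le hj (Nat.zero_le j); rwa [P.pts_zero] at this
  · have := P.pts_mono_le (le_refl P.n) hj; rwa [P.pts_last] at this

lemma tag_mem_Icc (P : TaggedPartition a b) {j : ℕ} (hj : j < P.n) :
    P.tag j ∈ Set.Icc a b := by
  obtain ⟨h1, h2⟩ := P.tag_mem j hj
  exact ⟨le_trans (P.pts_mem_Icc hj.le).1 h1,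
    le_trans h2 (P.pts_mem_Icc (Nat.succ_le_of_lt hj)).2⟩

lemma tag_mono (P : TaggedPartition a b) {i j : ℕ} (hij : i ≤ j) (hj : j < P.n) :
    P.tag i ≤ P.tag j := by
  rcases eq_or_lt_of_le hij with rfl | hlt
  · exact le_rfl
  · calc P.tag i ≤ P.pts (i + 1) := (P.tag_mem i (lt_trans hlt hj)).2
      _ ≤ P.pts j := P.pts_mono_le hj.le (Nat.succ_le_of_lt hlt)
      _ ≤ P.tag j := (P.tag_mem j hj).1

/-- Append one extra interval `[x, y]` with tag `t` to a partition of `[a, x]`. -/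
def extend {x : ℝ} (P : TaggedPartition a x) (y t : ℝ) (hxy : x < y)
    (ht : t ∈ Set.Icc x y) : TaggedPartition a y where
  n := P.n + 1
  pts := fun j => if j ≤ P.n then P.pts j else y
  tag := fun j => if j < P.n then P.tag j else t
  n_pos := Nat.succ_pos _
  pts_zero := by simp [Nat.zero_le, P.pts_zero]
  pts_last := by simp
  pts_mono := by
    intro j hj
    rcases Nat.lt_succ_iff_lt_or_eq.mp hj with h | rfl
    · simp only [h.le, Nat.succ_le_of_lt h, if_pos]
      exact P.pts_mono j h
    · simp only [le_refl, if_pos, Nat.not_succ_le_self, if_neg, if_false]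
      rw [P.pts_last]; exact hxy
  tag_mem := by
    intro j hj
    rcases Nat.lt_succ_iff_lt_or_eq.mp hj with h | rfl
    · simp only [h, h.le, Nat.succ_le_of_lt h, if_pos]
      exact P.tag_mem j h
    · simp only [lt_irrefl, if_neg, le_refl, if_pos, Nat.not_succ_le_self, if_false, not_false_iff]
      rw [P.pts_last]; exact ht

lemma isFine_extend {x : ℝ} {δ : ℝ → ℝ} {P : TaggedPartition a x} (hP : IsFine δ P)
    {y t : ℝ} (hxy : x < y) (ht : t ∈ Set.Icc x y)
    (hsub : Set.Icc x y ⊆ Set.Icc (t - δ t) (t + δ t)) :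
    IsFine δ (P.extend y t hxy ht) := by
  intro j hj
  rcases Nat.lt_succ_iff_lt_or_eq.mp hj with h | rfl
  · simp only [extend, h, h.le, Nat.succ_le_of_lt h, if_pos]
    exact hP j h
  · simp only [extend, lt_irrefl, if_neg, le_refl, if_pos, Nat.not_succ_le_self, if_false,
      not_false_iff]
    rw [P.pts_last]; exact hsub

/-- The one-interval partition of `[a, x]` with tag `t`. -/
def single (a x t : ℝ) (hax : a < x) (ht : t ∈ Set.Icc a x) : TaggedPartition a x where
  n := 1
  pts := fun j => if j = 0 then a else x
  tag := fun _ => t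
  n_pos := one_pos
  pts_zero := by simp
  pts_last := by simp
  pts_mono := by intro j hj; obtain rfl : j = 0 := Nat.lt_one_iff.mp hj; simpa using hax
  tag_mem := by intro j hj; obtain rfl : j = 0 := Nat.lt_one_iff.mp hj; simpa using ht

lemma isFine_single {δ : ℝ → ℝ} {a x t : ℝ} (hax : a < x) (ht : t ∈ Set.Icc a x)
    (hsub : Set.Icc a x ⊆ Set.Icc (t - δ t) (t + δ t)) :
    IsFine δ (single a x t hax ht) := by
  intro j hj
  obtain rfl : j = 0 := Nat.lt_one_iff.mp hj
  simpa [single] using hsub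

lemma isFine_mono {δ δ' : ℝ → ℝ} {P : TaggedPartition a b} (hP : IsFine δ P)
    (hle : ∀ t, δ t ≤ δ' t) : IsFine δ' P := by
  intro j hj
  refine (hP j hj).trans (Set.Icc_subset_Icc ?_ ?_)
  · linarith [hle (P.tag j)]
  · linarith [hle (P.tag j)]

end TaggedPartition

/-- **Cousin's lemma**: every positive gauge on `[a,b]` admits a fine tagged partition. -/
lemma cousin (a b : ℝ) (hab : a < b) (δ : ℝ → ℝ) (hδ : ∀ t ∈ Set.Icc a b, 0 < δ t) :
    ∃ P : TaggedPartition a b, IsFine δ P := by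
  set S : Set ℝ := {x | x ∈ Set.Ioc a b ∧ ∃ P : TaggedPartition a x, IsFine δ P} with hS
  have hδa : 0 < δ a := hδ a ⟨le_rfl, hab.le⟩
  have hx0S : min b (a + δ a) ∈ S := by
    have h1 : a < min b (a + δ a) := lt_min hab (by linarith)
    refine ⟨⟨h1, min_le_left _ _⟩,
      TaggedPartition.single a _ a h1 ⟨le_rfl, h1.le⟩,
      TaggedPartition.isFine_single h1 _ ?_⟩
    intro z hz
    exact ⟨by linarith [hz.1], le_trans hz.2 (min_le_right _ _)⟩
  have hne : S.Nonempty := ⟨_, hx0S⟩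
  have hbdd : BddAbove S := ⟨b, fun x hx => hx.1.2⟩
  set c := sSup S with hc
  have hac : a < c := lt_of_lt_of_le (lt_min hab (by linarith)) (le_csSup hbdd hx0S)
  have hcb : c ≤ b := csSup_le hne fun x hx => hx.1.2
  have hδc : 0 < δ c := hδ c ⟨hac.le, hcb⟩
  have hcS : ∃ P : TaggedPartition a c, IsFine δ P := by
    obtain ⟨x, hxS, hxgt⟩ := exists_lt_of_lt_csSup hne (show c - δ c < c by linarith)
    have hxc : x ≤ c := le_csSup hbdd hxS
    rcases eq_or_lt_of_le hxc with rfl | hlt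
    · exact hxS.2
    · obtain ⟨P, hP⟩ := hxS.2
      refine ⟨P.extend c c hlt ⟨hlt.le, le_rfl⟩,
        TaggedPartition.isFine_extend hP hlt _ ?_⟩
      intro z hz
      exact ⟨by linarith [hz.1], by linarith [hz.2]⟩
  obtain ⟨P, hP⟩ := hcS
  clear_value c
  rcases eq_or_lt_of_le hcb with rfl | hlt
  · exact ⟨P, hP⟩
  · exfalso
    have hcy : c < min b (c + δ c) := lt_min hlt (by linarith)
    have hyS : min b (c + δ c) ∈ S := by
      refine ⟨⟨hac.trans hcy, min_le_left _ _⟩,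
        P.extend _ c hcy ⟨le_rfl, hcy.le⟩,
        TaggedPartition.isFine_extend hP hcy _ ?_⟩
      intro z hz
      exact ⟨by linarith [hz.1], le_trans hz.2 (min_le_right _ _)⟩
    have hle := le_csSup hbdd hyS
    rw [← hc] at hle
    linarith

lemma var_nonneg (h : ℝ → ℝ) (a b : ℝ) : 0 ≤ var h a b := ENNReal.toReal_nonneg

lemma abs_sub_le_var {h : ℝ → ℝ} {a b : ℝ} (hbv : BoundedVariationOn h (Set.Icc a b))
    {x y : ℝ} (hx : x ∈ Set.Icc a b) (hy : y ∈ Set.Icc a b) :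
    |h x - h y| ≤ var h a b := by
  have h1 : edist (h x) (h y) ≤ eVariationOn h (Set.Icc a b) :=
    eVariationOn.edist_le h hx hy
  calc |h x - h y| = (edist (h x) (h y)).toReal := by
        rw [edist_dist, Real.dist_eq, ENNReal.toReal_ofReal (abs_nonneg _)]
    _ ≤ var h a b := ENNReal.toReal_mono hbv h1

lemma sum_abs_le_var {h : ℝ → ℝ} {a b : ℝ} (hbv : BoundedVariationOn h (Set.Icc a b))
    {u : ℕ → ℝ} (hu : Monotone u) (hmem : ∀ i, u i ∈ Set.Icc a b) (n : ℕ) :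
    ∑ i ∈ Finset.range n, |h (u (i + 1)) - h (u i)| ≤ var h a b := by
  have key : ∀ i : ℕ, edist (h (u (i + 1))) (h (u i)) =
      ENNReal.ofReal |h (u (i + 1)) - h (u i)| := fun i => by
    rw [edist_dist, Real.dist_eq]
  calc ∑ i ∈ Finset.range n, |h (u (i + 1)) - h (u i)|
      = (∑ i ∈ Finset.range n, edist (h (u (i + 1))) (h (u i))).toReal := by
        rw [ENNReal.toReal_sum (fun i _ => by rw [key]; exact ENNReal.ofReal_ne_top)]
        exact Finset.sum_congr rfl fun i _ => by
          rw [key, ENNReal.toReal_ofReal (abs_nonneg _)]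
    _ ≤ var h a b := ENNReal.toReal_mono hbv (eVariationOn.sum_le (f := h) (n := n) hu hmem)

/-- Key estimate: a Riemann–Stieltjes sum against a bounded `g` is controlled by
the BV norm of the integrand. -/
lemma rs_bound (a b : ℝ) (hab : a < b) {g : ℝ → ℝ} {M : ℝ}
    (hg : ∀ t ∈ Set.Icc a b, |g t| ≤ M) {h : ℝ → ℝ}
    (hbv : BoundedVariationOn h (Set.Icc a b)) (P : TaggedPartition a b) :
    |RS h g P| ≤ 4 * M * (|h a| + var h a b) := by
  have hM : 0 ≤ M := (abs_nonneg _).trans (hg a ⟨le_rfl, hab.le⟩)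
  set V := var h a b with hV
  have hV0 : 0 ≤ V := ENNReal.toReal_nonneg
  have haI : a ∈ Set.Icc a b := ⟨le_rfl, hab.le⟩
  have hn1 : P.n - 1 < P.n := Nat.sub_lt P.n_pos one_pos
  set F : ℕ → ℝ := fun i => h (P.tag i) with hF
  set Gf : ℕ → ℝ := fun i => g (P.pts (i + 1)) - g (P.pts i) with hGf
  have habs_tag : ∀ j, j < P.n → |F j| ≤ |h a| + V := by
    intro j hj
    have h2 : |h (P.tag j) - h a| ≤ V := abs_sub_le_var hbv (P.tag_mem_Icc hj) haI
    calc |F j| = |h a + (h (P.tag j) - h a)| := by rw [hF]; ring_nf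
      _ ≤ |h a| + |h (P.tag j) - h a| := abs_add_le _ _
      _ ≤ |h a| + V := by linarith
  have hGsum : ∀ k : ℕ, ∑ i ∈ Finset.range k, Gf i = g (P.pts k) - g (P.pts 0) :=
    fun k => Finset.sum_range_sub (fun i => g (P.pts i)) k
  have hGbd : ∀ k, k ≤ P.n → |∑ i ∈ Finset.range k, Gf i| ≤ 2 * M := by
    intro k hk
    rw [hGsum]
    have h1 := hg _ (P.pts_mem_Icc hk)
    have h2 := hg _ (P.pts_mem_Icc (Nat.zero_le P.n))
    calc |g (P.pts k) - g (P.pts 0)| ≤ |g (P.pts k)| + |g (P.pts 0)| := abs_sub _ _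
      _ ≤ 2 * M := by linarith
  have habel : RS h g P = F (P.n - 1) * (∑ i ∈ Finset.range P.n, Gf i)
      - ∑ i ∈ Finset.range (P.n - 1),
          (F (i + 1) - F i) * (∑ j ∈ Finset.range (i + 1), Gf j) := by
    have := Finset.sum_range_by_parts F Gf P.n
    simpa [smul_eq_mul, RS] using this
  have hsum : ∑ i ∈ Finset.range (P.n - 1), |F (i + 1) - F i| ≤ V := by
    set u : ℕ → ℝ := fun i => P.tag (min i (P.n - 1)) with hu
    have hmem : ∀ i, u i ∈ Set.Icc a b :=
      fun i => P.tag_mem_Icc (lt_of_le_of_lt (min_le_right _ _) hn1)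
    have hmono : Monotone u := fun i j hij =>
      P.tag_mono (min_le_min hij le_rfl) (lt_of_le_of_lt (min_le_right _ _) hn1)
    calc ∑ i ∈ Finset.range (P.n - 1), |F (i + 1) - F i|
        = ∑ i ∈ Finset.range (P.n - 1), |h (u (i + 1)) - h (u i)| := by
          refine Finset.sum_congr rfl fun i hi => ?_
          have hi' := Finset.mem_range.mp hi
          have e1 : min i (P.n - 1) = i := min_eq_left hi'.le
          have e2 : min (i + 1) (P.n - 1) = i + 1 := min_eq_left (Nat.succ_le_of_lt hi')
          rw [hu]; simp only [e1, e2]; rfl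
      _ ≤ V := sum_abs_le_var hbv hmono hmem (P.n - 1)
  have hterm : ∑ i ∈ Finset.range (P.n - 1),
      |(F (i + 1) - F i) * (∑ j ∈ Finset.range (i + 1), Gf j)| ≤ V * (2 * M) := by
    calc ∑ i ∈ Finset.range (P.n - 1),
        |(F (i + 1) - F i) * (∑ j ∈ Finset.range (i + 1), Gf j)|
        ≤ ∑ i ∈ Finset.range (P.n - 1), |F (i + 1) - F i| * (2 * M) := by
          refine Finset.sum_le_sum fun i hi => ?_
          have hi' := Finset.mem_range.mp hi
          have : i + 1 ≤ P.n := by have := P.n_pos; omega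
          rw [abs_mul]
          exact mul_le_mul_of_nonneg_left (hGbd (i + 1) this) (abs_nonneg _)
      _ = (∑ i ∈ Finset.range (P.n - 1), |F (i + 1) - F i|) * (2 * M) :=
          (Finset.sum_mul _ _ _).symm
      _ ≤ V * (2 * M) := mul_le_mul_of_nonneg_right hsum (by linarith)
  have hfin : |F (P.n - 1)| ≤ |h a| + V := habs_tag _ hn1
  have h1 : |F (P.n - 1) * (∑ i ∈ Finset.range P.n, Gf i)| ≤ (|h a| + V) * (2 * M) := by
    rw [abs_mul]
    exact mul_le_mul hfin (hGbd P.n le_rfl) (abs_nonneg _) (by positivity)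
  have h2 : |∑ i ∈ Finset.range (P.n - 1),
      (F (i + 1) - F i) * (∑ j ∈ Finset.range (i + 1), Gf j)| ≤ V * (2 * M) :=
    le_trans (Finset.abs_sum_le_sum_abs _ _) hterm
  rw [habel]
  calc |F (P.n - 1) * (∑ i ∈ Finset.range P.n, Gf i)
      - ∑ i ∈ Finset.range (P.n - 1),
          (F (i + 1) - F i) * (∑ j ∈ Finset.range (i + 1), Gf j)|
      ≤ |F (P.n - 1) * (∑ i ∈ Finset.range P.n, Gf i)|
        + |∑ i ∈ Finset.range (P.n - 1),
            (F (i + 1) - F i) * (∑ j ∈ Finset.range (i + 1), Gf j)| := abs_sub _ _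
    _ ≤ 4 * M * (|h a| + V) := by nlinarith [mul_nonneg hM (abs_nonneg (h a)), mul_nonneg hM hV0]

lemma RS_sub (f1 f2 g : ℝ → ℝ) {a b : ℝ} (P : TaggedPartition a b) :
    RS f1 g P - RS f2 g P = RS (fun t => f1 t - f2 t) g P := by
  unfold RS
  rw [← Finset.sum_sub_distrib]
  exact Finset.sum_congr rfl fun j _ => by ring

/-- BV-convergence theorem for the Kurzweil–Stieltjes integral. -/
theorem stmt14 (a b : ℝ) (hab : a < b) (g : ℝ → ℝ) (M : ℝ)
    (hg : ∀ t ∈ Set.Icc a b, |g t| ≤ M)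
    (f : ℕ → ℝ → ℝ) (flim : ℝ → ℝ) (I : ℕ → ℝ)
    (hfn : ∀ n, HasKS (f n) g a b (I n))
    (hbv : ∀ n, BoundedVariationOn (fun t => f n t - flim t) (Set.Icc a b))
    (hconv : Filter.Tendsto
      (fun n => |f n a - flim a| + var (fun t => f n t - flim t) a b)
      Filter.atTop (nhds 0)) :
    ∃ J : ℝ, HasKS flim g a b J ∧ Filter.Tendsto I Filter.atTop (nhds J) := by
  have hM : 0 ≤ M := (abs_nonneg _).trans (hg a ⟨le_rfl, hab.le⟩)
  set c : ℝ := 4 * M + 1 with hcdef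
  have hc0 : 0 < c := by rw [hcdef]; linarith
  have hN0 : ∀ n, 0 ≤ |f n a - flim a| + var (fun t => f n t - flim t) a b :=
    fun n => add_nonneg (abs_nonneg _) (var_nonneg _ _ _)
  have hkey : ∀ n (P : TaggedPartition a b), |RS (f n) g P - RS flim g P| ≤
      c * (|f n a - flim a| + var (fun t => f n t - flim t) a b) := by
    intro n P
    rw [RS_sub]
    have hr := rs_bound a b hab hg (hbv n) P
    have hr' : |RS (fun t => f n t - flim t) g P| ≤
        4 * M * (|f n a - flim a| + var (fun t => f n t - flim t) a b) := hr
    have h0 := hN0 n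
    nlinarith
  have hcauchy : CauchySeq I := by
    rw [Metric.cauchySeq_iff]
    intro ε hε
    obtain ⟨n0, hn0⟩ := (Metric.tendsto_atTop.mp hconv) (ε / (4 * c)) (by positivity)
    refine ⟨n0, fun m hm n hn => ?_⟩
    obtain ⟨δ1, hδ1, hP1⟩ := hfn m (ε / 4) (by linarith)
    obtain ⟨δ2, hδ2, hP2⟩ := hfn n (ε / 4) (by linarith)
    obtain ⟨P, hPf⟩ := cousin a b hab (fun t => min (δ1 t) (δ2 t))
      (fun t ht => lt_min (hδ1 t ht).1 (hδ2 t ht).1)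
    have hf1 := hP1 P (TaggedPartition.isFine_mono hPf fun t => min_le_left _ _)
    have hf2 := hP2 P (TaggedPartition.isFine_mono hPf fun t => min_le_right _ _)
    have hcNbound : ∀ k, k ≥ n0 →
        c * (|f k a - flim a| + var (fun t => f k t - flim t) a b) < ε / 4 := by
      intro k hk
      have h1 : dist (|f k a - flim a| + var (fun t => f k t - flim t) a b) 0
          < ε / (4 * c) := hn0 k hk
      rw [Real.dist_eq, sub_zero, abs_of_nonneg (hN0 k)] at h1
      have h2 := mul_lt_mul_of_pos_left h1 hc0
      have h3 : c * (ε / (4 * c)) = ε / 4 := by field_simp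
      linarith
    obtain ⟨e1a, e1b⟩ := abs_lt.mp hf1
    obtain ⟨e2a, e2b⟩ := abs_lt.mp hf2
    obtain ⟨e3a, e3b⟩ := abs_lt.mp (lt_of_le_of_lt (hkey m P) (hcNbound m hm))
    obtain ⟨e4a, e4b⟩ := abs_lt.mp (lt_of_le_of_lt (hkey n P) (hcNbound n hn))
    rw [Real.dist_eq, abs_sub_lt_iff]
    constructor <;> linarith
  obtain ⟨J, hJ⟩ := cauchySeq_tendsto_of_complete hcauchy
  refine ⟨J, ?_, hJ⟩
  intro ε hε
  have h1 : ∀ᶠ n in Filter.atTop,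
      (|f n a - flim a| + var (fun t => f n t - flim t) a b) < ε / (3 * c) :=
    hconv.eventually (gt_mem_nhds (by positivity))
  have h2 : ∀ᶠ n in Filter.atTop, dist (I n) J < ε / 3 := by
    obtain ⟨n0, hn0⟩ := Metric.tendsto_atTop.mp hJ (ε / 3) (by linarith)
    exact Filter.eventually_atTop.mpr ⟨n0, hn0⟩
  obtain ⟨n, hn1, hn2⟩ := (h1.and h2).exists
  obtain ⟨δ, hδ, hP⟩ := hfn n (ε / 3) (by linarith)
  refine ⟨δ, hδ, fun P hPf => ?_⟩
  obtain ⟨e1a, e1b⟩ := abs_lt.mp (hP P hPf)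
  have e3 : c * (|f n a - flim a| + var (fun t => f n t - flim t) a b) < ε / 3 := by
    have h2' := mul_lt_mul_of_pos_left hn1 hc0
    have h3 : c * (ε / (3 * c)) = ε / 3 := by field_simp
    linarith
  obtain ⟨e2a, e2b⟩ := abs_lt.mp (lt_of_le_of_lt (hkey n P) e3)
  rw [Real.dist_eq] at hn2
  obtain ⟨e4a, e4b⟩ := abs_lt.mp hn2
  rw [abs_sub_lt_iff]
  constructor <;> linarith
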